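/- Let A and B be finite types and let μ, ν be probability distributions on A and B respectively. For every ε > 0 there exists m₀ such that for every natural number m ≥ m₀ for which m·μ(a)·ν(b) is a natural number for all (a,b) ∈ A×B, one has multinomial(m; (m·μ(a)·ν(b))_{(a,b)∈A×B}) ≥ 2^{−εm} · multinomial(m; (m·μ(a))_{a∈A}) · multinomial(m; (m·ν(b))_{b∈B}). -/

import Mathlib

open Real Finset

lemma log_fact_lb (n : ℕ) : (n:ℝ) * Real.log n - n ≤ Real.log (Nat.factorial n) := by
  rcases Nat.eq_zero_or_pos n with h | h
  · simp [h]
  have hf : (0:ℝ) < (Nat.factorial n : ℝ) := by exact_mod_cast n.factorial_pos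
  have h1 := Real.pow_div_factorial_le_exp (n:ℝ) (by positivity) n
  have h2 : (n:ℝ)^n ≤ Real.exp n * (Nat.factorial n : ℝ) := by
    rw [div_le_iff₀ hf] at h1; linarith
  have h3 := Real.log_le_log (by positivity) h2
  rw [Real.log_pow, Real.log_mul (Real.exp_ne_zero _) (ne_of_gt hf), Real.log_exp] at h3
  linarith

lemma fact_ub : ∀ n : ℕ, 1 ≤ n → (Nat.factorial n : ℝ) ≤ (n:ℝ)^(n+1) * Real.exp (1 - n) := by
  intro n hn
  induction n, hn using Nat.le_induction with
  | base => simp [Nat.factorial]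
  | succ n hn ih =>
    have hn0 : (0:ℝ) < n := by exact_mod_cast hn
    have key : (n:ℝ)^(n+1) * Real.exp 1 ≤ ((n:ℝ)+1)^(n+1) := by
      have hx : Real.exp ((1:ℝ)/(n+1)) ≤ ((n:ℝ)+1)/n := by
        have h1 : (1:ℝ) - 1/(n+1) ≤ Real.exp (-(1/(n+1))) := by
          have := Real.add_one_le_exp (-(1/((n:ℝ)+1))); linarith
        have h2 : (0:ℝ) < 1 - 1/(n+1) := by
          rw [sub_pos, div_lt_one (by positivity)]; linarith
        have h3 : Real.exp ((1:ℝ)/(n+1)) ≤ 1 / (1 - 1/(n+1)) := by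
          rw [le_div_iff₀ h2]
          calc Real.exp (1/((n:ℝ)+1)) * (1 - 1/(n+1))
              ≤ Real.exp (1/((n:ℝ)+1)) * Real.exp (-(1/((n:ℝ)+1))) :=
                mul_le_mul_of_nonneg_left h1 (Real.exp_nonneg _)
            _ = 1 := by rw [← Real.exp_add]; simp
        have h4 : (1:ℝ) / (1 - 1/(n+1)) = ((n:ℝ)+1)/n := by
          field_simp
          rw [add_sub_cancel_right, div_self hn0.ne']
        rw [h4] at h3; exact h3
      have h5 : Real.exp 1 ≤ (((n:ℝ)+1)/n)^(n+1) := by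
        have : Real.exp 1 = Real.exp ((1:ℝ)/(n+1)) ^ (n+1) := by
          rw [← Real.exp_nat_mul]; congr 1; push_cast; field_simp
        rw [this]
        exact pow_le_pow_left₀ (Real.exp_nonneg _) hx _
      calc (n:ℝ)^(n+1) * Real.exp 1 ≤ (n:ℝ)^(n+1) * (((n:ℝ)+1)/n)^(n+1) := by
            exact mul_le_mul_of_nonneg_left h5 (by positivity)
        _ = ((n:ℝ)+1)^(n+1) := by
            rw [← mul_pow]; congr 1; field_simp
    have step : (Nat.factorial (n+1) : ℝ) = ((n:ℝ)+1) * Nat.factorial n := by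
      rw [Nat.factorial_succ]; push_cast; ring
    calc (Nat.factorial (n+1) : ℝ) = ((n:ℝ)+1) * Nat.factorial n := step
      _ ≤ ((n:ℝ)+1) * ((n:ℝ)^(n+1) * Real.exp (1 - n)) := by
          exact mul_le_mul_of_nonneg_left ih (by positivity)
      _ = ((n:ℝ)^(n+1) * Real.exp 1) * (((n:ℝ)+1) * Real.exp (-(n:ℝ))) := by
          rw [show (1:ℝ) - n = 1 + (-(n:ℝ)) by ring, Real.exp_add]; ring
      _ ≤ ((n:ℝ)+1)^(n+1) * (((n:ℝ)+1) * Real.exp (-(n:ℝ))) := by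
          exact mul_le_mul_of_nonneg_right key (by positivity)
      _ = ((n:ℝ)+1)^(n+2) * Real.exp (1 - ((n:ℝ)+1)) := by
          rw [show (1:ℝ) - ((n:ℝ)+1) = -(n:ℝ) by ring]; ring
      _ = (((n+1:ℕ)):ℝ)^((n+1)+1) * Real.exp (1 - ((n+1:ℕ):ℝ)) := by push_cast; try ring

lemma log_fact_ub (n : ℕ) : Real.log (Nat.factorial n) ≤ (n:ℝ) * Real.log n - n + (1 + Real.log (n+1)) := by
  rcases Nat.eq_zero_or_pos n with h | h
  · simp [h]; try norm_num
  have hn0 : (0:ℝ) < n := by exact_mod_cast h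
  have h1 := fact_ub n h
  have h2 := Real.log_le_log (by exact_mod_cast n.factorial_pos) h1
  rw [Real.log_mul (by positivity) (Real.exp_ne_zero _), Real.log_pow, Real.log_exp] at h2
  have h3 : Real.log n ≤ Real.log (n+1) := Real.log_le_log hn0 (by linarith)
  push_cast at h2 ⊢
  nlinarith [h3]


lemma log_multinomial {α : Type*} [Fintype α] (G : α → ℕ) :
    Real.log (Nat.multinomial Finset.univ G : ℝ) =
      Real.log (Nat.factorial (∑ i, G i) : ℝ) - ∑ i, Real.log (Nat.factorial (G i) : ℝ) := by
  have hspec := Nat.multinomial_spec Finset.univ G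
  have hcast : ((∏ i, Nat.factorial (G i) : ℕ) : ℝ) * (Nat.multinomial Finset.univ G : ℝ)
      = (Nat.factorial (∑ i, G i) : ℝ) := by exact_mod_cast hspec
  have hP : (0:ℝ) < ((∏ i, Nat.factorial (G i) : ℕ) : ℝ) := by
    exact_mod_cast Finset.prod_pos fun i _ => (G i).factorial_pos
  have hM : (0:ℝ) < (Nat.multinomial Finset.univ G : ℝ) := by
    exact_mod_cast Nat.multinomial_pos _ _
  rw [← hcast, Real.log_mul (ne_of_gt hP) (ne_of_gt hM)]
  push_cast
  rw [Real.log_prod (fun i _ => by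
    exact_mod_cast (G i).factorial_pos.ne')]
  ring


/-- For probability distributions `μ` on `A` and `ν` on `B`, the
multinomial coefficient of the product-type counts `(m·μ(a)·ν(b))` is at least
`2^{−εm}` times the product of the multinomial coefficients of the marginal counts,
for all sufficiently large `m` along which all counts are integers. -/
theorem stmt16 (A B : Type*) [Fintype A] [Fintype B]
    (μ : A → ℝ) (ν : B → ℝ)
    (hμ0 : ∀ a, 0 ≤ μ a) (hμ1 : ∑ a, μ a = 1)
    (hν0 : ∀ b, 0 ≤ ν b) (hν1 : ∑ b, ν b = 1)
    (ε : ℝ) (hε : 0 < ε) :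
    ∃ m₀ : ℕ, ∀ m : ℕ, m₀ ≤ m →
      ∀ (F : A × B → ℕ) (FA : A → ℕ) (FB : B → ℕ),
        (∀ p : A × B, (F p : ℝ) = m * μ p.1 * ν p.2) →
        (∀ a, (FA a : ℝ) = m * μ a) →
        (∀ b, (FB b : ℝ) = m * ν b) →
        (2 : ℝ) ^ (-(ε * m)) * (Nat.multinomial Finset.univ FA : ℝ) *
            (Nat.multinomial Finset.univ FB : ℝ)
          ≤ (Nat.multinomial Finset.univ F : ℝ) := by
  set k : ℝ := ((Fintype.card A * Fintype.card B : ℕ) : ℝ) with hk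
  have hk0 : 0 ≤ k := by positivity
  have hc : 0 < ε * Real.log 2 := mul_pos hε (Real.log_pos (by norm_num))
  -- eventual bound
  have hev : ∀ᶠ m : ℕ in Filter.atTop,
      (k + 1) * (1 + Real.log (m + 1)) ≤ ε * m * Real.log 2 := by
    have hlo := Real.isLittleO_log_id_atTop.bound
      (show (0:ℝ) < ε * Real.log 2 / (2 * (k + 1)) by positivity)
    have hten : Filter.Tendsto (fun m : ℕ => ((m : ℝ) + 1)) Filter.atTop Filter.atTop :=
      Filter.tendsto_atTop_add_const_right _ 1 tendsto_natCast_atTop_atTop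
    have h1 := hten.eventually hlo
    have h2 := hten.eventually_ge_atTop ((2 * (k + 1) + ε * Real.log 2) * (2 * (k + 1)) / (ε * Real.log 2))
    filter_upwards [h1, h2, Filter.eventually_ge_atTop 1] with m hm1 hm2 hm3
    have hmR : (1:ℝ) ≤ (m:ℝ) := by exact_mod_cast hm3
    set c := ε * Real.log 2 with hc'
    have hlog : Real.log ((m:ℝ) + 1) ≤ c / (2 * (k + 1)) * ((m:ℝ) + 1) := by
      have := hm1
      rw [Real.norm_eq_abs, Real.norm_eq_abs] at this
      calc Real.log ((m:ℝ)+1) ≤ |Real.log ((m:ℝ)+1)| := le_abs_self _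
        _ ≤ c / (2 * (k+1)) * |id ((m:ℝ)+1)| := this
        _ = c / (2 * (k+1)) * ((m:ℝ)+1) := by
            rw [id_eq, abs_of_pos (by linarith)]
    have hkk : (0:ℝ) < k + 1 := by linarith
    -- (k+1)(1+log(m+1)) ≤ (k+1) + (c/2)(m+1) ≤ c m
    have step1 : (k+1) * (1 + Real.log ((m:ℝ)+1)) ≤ (k+1) + c/2 * ((m:ℝ)+1) := by
      have := mul_le_mul_of_nonneg_left hlog (le_of_lt hkk)
      have heq : (k+1) * (c / (2*(k+1)) * ((m:ℝ)+1)) = c/2 * ((m:ℝ)+1) := by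
        field_simp
      nlinarith
    have step2 : (k+1) + c/2 * ((m:ℝ)+1) ≤ c * m := by
      have h4 : (2 * (k + 1) + c) * (2 * (k+1)) / c ≤ (m:ℝ) + 1 := hm2
      rw [div_le_iff₀ hc] at h4
      nlinarith
    calc (k+1) * (1 + Real.log ((m:ℝ)+1)) ≤ c * m := le_trans step1 step2
      _ = ε * m * Real.log 2 := by rw [hc']; ring
  obtain ⟨m₁, hm₁⟩ := Filter.eventually_atTop.mp hev
  refine ⟨max m₁ 1, fun m hm F FA FB hF hFA hFB => ?_⟩
  have hm1 : 1 ≤ m := le_trans (le_max_right _ _) hm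
  have hbound := hm₁ m (le_trans (le_max_left _ _) hm)
  have hm0 : (0:ℝ) < m := by exact_mod_cast hm1
  -- basic facts
  have hμle : ∀ a, μ a ≤ 1 := fun a => hμ1 ▸ single_le_sum (fun i _ => hμ0 i) (mem_univ a)
  have hνle : ∀ b, ν b ≤ 1 := fun b => hν1 ▸ single_le_sum (fun i _ => hν0 i) (mem_univ b)
  have hFle : ∀ p, F p ≤ m := by
    intro p
    have h1 : μ p.1 * ν p.2 ≤ 1 := mul_le_one₀ (hμle p.1) (hν0 p.2) (hνle p.2)
    have : (F p : ℝ) ≤ m := by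
      rw [hF p]
      calc (m:ℝ) * μ p.1 * ν p.2 = m * (μ p.1 * ν p.2) := by ring
        _ ≤ m * 1 := mul_le_mul_of_nonneg_left h1 hm0.le
        _ = m := mul_one _
    exact_mod_cast this
  -- sums of counts
  have hFAs : ∑ a, FA a = m := by
    have : ((∑ a, FA a : ℕ) : ℝ) = m := by
      push_cast
      simp only [hFA, ← Finset.mul_sum, hμ1, mul_one]
    exact_mod_cast this
  have hFBs : ∑ b, FB b = m := by
    have : ((∑ b, FB b : ℕ) : ℝ) = m := by
      push_cast
      simp only [hFB, ← Finset.mul_sum, hν1, mul_one]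
    exact_mod_cast this
  have hFs : ∑ p, F p = m := by
    have : ((∑ p, F p : ℕ) : ℝ) = m := by
      push_cast
      simp only [hF]
      rw [Fintype.sum_prod_type]
      have inner : ∀ a, ∑ b, (m:ℝ) * μ a * ν b = (m:ℝ) * μ a := by
        intro a; rw [← Finset.mul_sum, hν1, mul_one]
      rw [Finset.sum_congr rfl fun a _ => inner a, ← Finset.mul_sum, hμ1, mul_one]
    exact_mod_cast this
  -- multinomial log identities
  have hMApos : (0:ℝ) < (Nat.multinomial Finset.univ FA : ℝ) := by
    exact_mod_cast Nat.multinomial_pos _ _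
  have hMBpos : (0:ℝ) < (Nat.multinomial Finset.univ FB : ℝ) := by
    exact_mod_cast Nat.multinomial_pos _ _
  have hMFpos : (0:ℝ) < (Nat.multinomial Finset.univ F : ℝ) := by
    exact_mod_cast Nat.multinomial_pos _ _
  have hlogMA : Real.log (Nat.multinomial Finset.univ FA : ℝ)
      = Real.log (Nat.factorial m : ℝ) - ∑ a, Real.log (Nat.factorial (FA a) : ℝ) := by
    rw [log_multinomial, hFAs]
  have hlogMB : Real.log (Nat.multinomial Finset.univ FB : ℝ)
      = Real.log (Nat.factorial m : ℝ) - ∑ b, Real.log (Nat.factorial (FB b) : ℝ) := by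
    rw [log_multinomial, hFBs]
  have hlogMF : Real.log (Nat.multinomial Finset.univ F : ℝ)
      = Real.log (Nat.factorial m : ℝ) - ∑ p, Real.log (Nat.factorial (F p) : ℝ) := by
    rw [log_multinomial, hFs]
  -- entropy identity
  set S := ∑ a, μ a * Real.log (μ a) with hS
  set T := ∑ b, ν b * Real.log (ν b) with hT
  have hA : ∑ a, (FA a:ℝ) * Real.log (FA a) = m * Real.log m + m * S := by
    have term : ∀ a, (FA a:ℝ) * Real.log (FA a)
        = (m * Real.log m) * μ a + m * (μ a * Real.log (μ a)) := by
      intro a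
      rw [hFA a]
      rcases eq_or_lt_of_le (hμ0 a) with h|h
      · rw [← h]; simp
      · rw [Real.log_mul hm0.ne' h.ne']; ring
    rw [Finset.sum_congr rfl fun a _ => term a, Finset.sum_add_distrib,
      ← Finset.mul_sum, ← Finset.mul_sum, hμ1, mul_one]
  have hB : ∑ b, (FB b:ℝ) * Real.log (FB b) = m * Real.log m + m * T := by
    have term : ∀ b, (FB b:ℝ) * Real.log (FB b)
        = (m * Real.log m) * ν b + m * (ν b * Real.log (ν b)) := by
      intro b
      rw [hFB b]
      rcases eq_or_lt_of_le (hν0 b) with h|h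
      · rw [← h]; simp
      · rw [Real.log_mul hm0.ne' h.ne']; ring
    rw [Finset.sum_congr rfl fun b _ => term b, Finset.sum_add_distrib,
      ← Finset.mul_sum, ← Finset.mul_sum, hν1, mul_one]
  have hC : ∑ p, (F p:ℝ) * Real.log (F p) = m * Real.log m + m * S + m * T := by
    have term : ∀ (a : A) (b : B), ((m:ℝ) * μ a * ν b) * Real.log ((m:ℝ) * μ a * ν b)
        = (m * Real.log m * μ a) * ν b + (m * (μ a * Real.log (μ a))) * ν b
          + ((m:ℝ) * μ a) * (ν b * Real.log (ν b)) := by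
      intro a b
      rcases eq_or_lt_of_le (hμ0 a) with h|h
      · rw [← h]; simp
      rcases eq_or_lt_of_le (hν0 b) with h'|h'
      · rw [← h']; simp
      rw [Real.log_mul (by positivity) h'.ne', Real.log_mul hm0.ne' h.ne']
      ring
    simp only [hF]
    rw [Fintype.sum_prod_type]
    have inner : ∀ a, ∑ b, ((m:ℝ) * μ a * ν b) * Real.log ((m:ℝ) * μ a * ν b)
        = (m * Real.log m) * μ a + m * (μ a * Real.log (μ a)) + (m * T) * μ a := by
      intro a
      rw [Finset.sum_congr rfl fun b _ => term a b, Finset.sum_add_distrib,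
        Finset.sum_add_distrib, ← Finset.mul_sum, ← Finset.mul_sum, ← Finset.mul_sum,
        hν1, mul_one, mul_one]
      ring
    rw [Finset.sum_congr rfl fun a _ => inner a, Finset.sum_add_distrib,
      Finset.sum_add_distrib, ← Finset.mul_sum, ← Finset.mul_sum, ← Finset.mul_sum,
      hμ1, mul_one, mul_one]
    try ring
  -- lower bounds on marginal log-factorial sums
  have hFAcast : ∑ a, ((FA a : ℕ):ℝ) = (m:ℝ) := by rw [← Nat.cast_sum, hFAs]
  have hFBcast : ∑ b, ((FB b : ℕ):ℝ) = (m:ℝ) := by rw [← Nat.cast_sum, hFBs]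
  have hFcast : ∑ p, ((F p : ℕ):ℝ) = (m:ℝ) := by rw [← Nat.cast_sum, hFs]
  have lbA : ∑ a, (FA a:ℝ) * Real.log (FA a) - m ≤ ∑ a, Real.log (Nat.factorial (FA a) : ℝ) := by
    have hsum := Finset.sum_le_sum (fun a (_ : a ∈ univ) => log_fact_lb (FA a))
    rw [Finset.sum_sub_distrib, hFAcast] at hsum
    exact hsum
  have lbB : ∑ b, (FB b:ℝ) * Real.log (FB b) - m ≤ ∑ b, Real.log (Nat.factorial (FB b) : ℝ) := by
    have hsum := Finset.sum_le_sum (fun b (_ : b ∈ univ) => log_fact_lb (FB b))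
    rw [Finset.sum_sub_distrib, hFBcast] at hsum
    exact hsum
  -- upper bounds
  have ubm : Real.log (Nat.factorial m : ℝ) ≤ m * Real.log m - m + (1 + Real.log (m+1)) :=
    log_fact_ub m
  have ubF : ∑ p, Real.log (Nat.factorial (F p) : ℝ)
      ≤ ∑ p, (F p:ℝ) * Real.log (F p) - m + k * (1 + Real.log ((m:ℝ)+1)) := by
    have term : ∀ p ∈ (univ : Finset (A × B)), Real.log (Nat.factorial (F p) : ℝ)
        ≤ (F p:ℝ) * Real.log (F p) - F p + (1 + Real.log ((m:ℝ)+1)) := by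
      intro p _
      refine le_trans (log_fact_ub (F p)) ?_
      have hle : ((F p:ℕ):ℝ) ≤ (m:ℝ) := by exact_mod_cast hFle p
      have hlog : Real.log ((F p:ℝ)+1) ≤ Real.log ((m:ℝ)+1) :=
        Real.log_le_log (by positivity) (by linarith)
      linarith
    have hsum := Finset.sum_le_sum term
    rw [Finset.sum_add_distrib, Finset.sum_sub_distrib, hFcast, Finset.sum_const,
      Finset.card_univ, Fintype.card_prod, nsmul_eq_mul] at hsum
    rw [hk]
    exact hsum
  -- assemble
  have hΔ : Real.log (Nat.multinomial Finset.univ FA : ℝ)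
        + Real.log (Nat.multinomial Finset.univ FB : ℝ)
      ≤ ε * m * Real.log 2 + Real.log (Nat.multinomial Finset.univ F : ℝ) := by
    rw [hlogMA, hlogMB, hlogMF]
    linarith [hA, hB, hC, lbA, lbB, ubm, ubF, hbound]
  have hLHSpos : (0:ℝ) < (2 : ℝ) ^ (-(ε * m)) * (Nat.multinomial Finset.univ FA : ℝ)
      * (Nat.multinomial Finset.univ FB : ℝ) := by positivity
  rw [← Real.log_le_log_iff hLHSpos hMFpos]
  rw [Real.log_mul (by positivity) hMBpos.ne', Real.log_mul (by positivity) hMApos.ne',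
    Real.log_rpow (by norm_num)]
  linarith [hΔ]
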